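/- Let N = 2^p with p ≥ 8. For all frequencies (k_1,k_2) with -N/2+1 ≤ k_1,k_2 ≤ N/2 (not both zero), and for every bivariate Haar basis element h^e_{n,ℓ}, one has |⟨φ_{k_1,k_2}, h^e_{n,ℓ}⟩| ≤ min(1, 18π/max(|k_1|,|k_2|)). -/

import Mathlib

open Complex Real Finset

noncomputable def haarBlock (p n ℓ e t : ℕ) : ℂ :=
  if ℓ * 2 ^ (p - n) ≤ t ∧ t < ℓ * 2 ^ (p - n) + 2 ^ (p - n - 1) then
    (((2 : ℝ) ^ (((n : ℝ) - p) / 2) : ℝ) : ℂ)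
  else if ℓ * 2 ^ (p - n) + 2 ^ (p - n - 1) ≤ t ∧ t < (ℓ + 1) * 2 ^ (p - n) then
    (-1 : ℂ) ^ e * (((2 : ℝ) ^ (((n : ℝ) - p) / 2) : ℝ) : ℂ)
  else 0

/-- The bivariate Haar basis element `h^e_{n,ℓ}(t₁,t₂) = h^{e₁}_{n,ℓ₁}(t₁) h^{e₂}_{n,ℓ₂}(t₂)`. -/
noncomputable def haar2 (p n ℓ₁ ℓ₂ e₁ e₂ t₁ t₂ : ℕ) : ℂ :=
  haarBlock p n ℓ₁ e₁ t₁ * haarBlock p n ℓ₂ e₂ t₂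

/-- The two-dimensional discrete Fourier vector
`φ_{k₁,k₂}(t₁,t₂) = N^{-1} e^{2πi(t₁k₁+t₂k₂)/N}`, `N = 2^p`. -/
noncomputable def fourierVec2 (p : ℕ) (k₁ k₂ : ℤ) (t₁ t₂ : ℕ) : ℂ :=
  ((1 / (2 ^ p) : ℝ) : ℂ) *
    Complex.exp (2 * π * Complex.I * (t₁ * k₁ + t₂ * k₂) / 2 ^ p)

lemma abs_exp_theta (θ : ℝ) :
    ‖Complex.exp (θ * Complex.I) - 1‖ = 2 * |Real.sin (θ / 2)| := by
  rw [Complex.exp_mul_I, ← Complex.ofReal_cos, ← Complex.ofReal_sin]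
  have h0 : (↑(Real.cos θ) : ℂ) + ↑(Real.sin θ) * Complex.I - 1
      = ↑(Real.cos θ - 1) + ↑(Real.sin θ) * Complex.I := by push_cast; ring
  rw [h0, Complex.norm_add_mul_I]
  have h : (Real.cos θ - 1) ^ 2 + Real.sin θ ^ 2 = (2 * |Real.sin (θ / 2)|) ^ 2 := by
    have h1 : Real.sin (θ / 2) ^ 2 = 1 / 2 - Real.cos (2 * (θ / 2)) / 2 :=
      Real.sin_sq_eq_half_sub _
    have h2 : Real.sin θ ^ 2 = 1 - Real.cos θ ^ 2 := Real.sin_sq θ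
    have h3 : 2 * (θ / 2) = θ := by ring
    rw [mul_pow, _root_.sq_abs, h1, h3, h2]; ring
  rw [h, Real.sqrt_sq (by positivity)]

lemma geo_abs (ω : ℂ) (hω : ‖ω‖ = 1) (hω1 : ω ≠ 1) (a b : ℕ) :
    ‖∑ t ∈ Finset.Ico a b, ω ^ t‖ ≤ 2 / ‖ω - 1‖ := by
  have hd : 0 < ‖ω - 1‖ := by
    simpa [sub_eq_zero] using norm_pos_iff.2 (sub_ne_zero.2 hω1)
  rcases le_or_gt b a with h | h
  · rw [Finset.Ico_eq_empty (by omega), Finset.sum_empty]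
    simp [le_div_iff₀ hd]
  · rw [geom_sum_Ico hω1 h.le, norm_div]
    gcongr
    calc ‖ω ^ b - ω ^ a‖ ≤ ‖ω ^ b‖ + ‖ω ^ a‖ :=
          norm_sub_le _ _
      _ = 2 := by simp [norm_pow, hω]; norm_num

lemma omega_lb (p : ℕ) (hp : 1 ≤ p) (k : ℤ) (hk0 : k ≠ 0) (hk : |k| ≤ 2 ^ (p - 1)) :
    4 * |(k : ℝ)| / 2 ^ p ≤
      ‖Complex.exp (((-(2 * π * (k : ℝ) / 2 ^ p)) : ℝ) * Complex.I) - 1‖ := by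
  have hKle : |(k : ℝ)| ≤ 2 ^ (p - 1) := by
    have := hk
    calc |(k : ℝ)| = ((|k| : ℤ) : ℝ) := by rw [Int.cast_abs]
      _ ≤ ((2 ^ (p - 1) : ℤ) : ℝ) := by exact_mod_cast this
      _ = 2 ^ (p - 1) := by push_cast; ring
  have hKpos : 0 < |(k : ℝ)| := by
    simp only [abs_pos, ne_eq, Int.cast_eq_zero]; exact hk0
  have h2p : (0 : ℝ) < 2 ^ p := by positivity
  rw [abs_exp_theta]
  have hhalf : (-(2 * π * (k : ℝ) / 2 ^ p)) / 2 = -(π * (k : ℝ) / 2 ^ p) := by ring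
  rw [hhalf, Real.sin_neg, abs_neg]
  set y := π * |(k : ℝ)| / 2 ^ p with hy
  have habs : |Real.sin (π * (k : ℝ) / 2 ^ p)| = |Real.sin y| := by
    rcases abs_cases (k : ℝ) with ⟨h, _⟩ | ⟨h, _⟩
    · rw [hy, h]
    · rw [hy, h, show π * -(k : ℝ) / 2 ^ p = -(π * (k : ℝ) / 2 ^ p) by ring,
        Real.sin_neg, abs_neg]
  rw [habs]
  have hy0 : 0 ≤ y := by positivity
  have hy2 : y ≤ π / 2 := by
    rw [hy, div_le_div_iff₀ h2p two_pos]
    have h2 : (2 : ℝ) ^ p = 2 ^ (p - 1) * 2 := by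
      rw [← pow_succ]; congr 1; omega
    calc π * |(k : ℝ)| * 2 ≤ π * (2 ^ (p - 1)) * 2 := by
          have := Real.pi_pos; nlinarith
      _ = π * 2 ^ p := by rw [h2]; ring
  have hsin : 2 / π * y ≤ Real.sin y := Real.mul_le_sin hy0 hy2
  have hsin_nonneg : 0 ≤ Real.sin y :=
    Real.sin_nonneg_of_nonneg_of_le_pi hy0 (by linarith [Real.pi_pos])
  rw [_root_.abs_of_nonneg hsin_nonneg]
  have heq : 2 / π * y = 2 * |(k : ℝ)| / 2 ^ p := by
    rw [hy]; field_simp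
  have h2 : 2 * |(k : ℝ)| / 2 ^ p ≤ Real.sin y := by rw [← heq]; exact hsin
  calc 4 * |(k : ℝ)| / 2 ^ p = 2 * (2 * |(k : ℝ)| / 2 ^ p) := by ring
    _ ≤ 2 * Real.sin y := by linarith


lemma haar_split (p n ℓ e : ℕ) (hn : n < p) (hℓ : ℓ < 2 ^ n) (f : ℕ → ℂ) :
    ∑ t ∈ Finset.range (2 ^ p), f t * haarBlock p n ℓ e t =
      (((2 : ℝ) ^ (((n : ℝ) - p) / 2) : ℝ) : ℂ) *
        ((∑ t ∈ Finset.Ico (ℓ * 2 ^ (p - n)) (ℓ * 2 ^ (p - n) + 2 ^ (p - n - 1)), f t) +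
          (-1 : ℂ) ^ e *
            ∑ t ∈ Finset.Ico (ℓ * 2 ^ (p - n) + 2 ^ (p - n - 1))
                (ℓ * 2 ^ (p - n) + 2 * 2 ^ (p - n - 1)), f t) := by
  set A := ℓ * 2 ^ (p - n) with hA
  set m := 2 ^ (p - n - 1) with hm
  have hpow : 2 ^ (p - n) = 2 * m := by
    rw [hm, ← pow_succ']
    congr 1
    omega
  have hend : A + 2 * m = (ℓ + 1) * 2 ^ (p - n) := by rw [hA, hpow]; ring
  have hsub : A + 2 * m ≤ 2 ^ p := by
    rw [hend]
    calc (ℓ + 1) * 2 ^ (p - n) ≤ 2 ^ n * 2 ^ (p - n) :=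
          Nat.mul_le_mul_right _ (by omega)
      _ = 2 ^ p := by rw [← pow_add]; congr 1; omega
  have hzero : ∀ t, t < A ∨ A + 2 * m ≤ t → haarBlock p n ℓ e t = 0 := by
    intro t ht
    unfold haarBlock
    rw [if_neg, if_neg]
    · rw [← hend]; omega
    · omega
  have e1 : ∀ t ∈ Finset.Ico A (A + m), haarBlock p n ℓ e t
      = (((2 : ℝ) ^ (((n : ℝ) - p) / 2) : ℝ) : ℂ) := by
    intro t ht
    simp only [Finset.mem_Ico] at ht
    unfold haarBlock
    rw [if_pos ⟨ht.1, ht.2⟩]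
  have e2 : ∀ t ∈ Finset.Ico (A + m) (A + 2 * m), haarBlock p n ℓ e t
      = (-1 : ℂ) ^ e * (((2 : ℝ) ^ (((n : ℝ) - p) / 2) : ℝ) : ℂ) := by
    intro t ht
    simp only [Finset.mem_Ico] at ht
    unfold haarBlock
    rw [if_neg (by omega), if_pos ⟨ht.1, by rw [← hend]; exact ht.2⟩]
  have hss : ∑ t ∈ Finset.range (2 ^ p), f t * haarBlock p n ℓ e t
      = ∑ t ∈ Finset.Ico A (A + 2 * m), f t * haarBlock p n ℓ e t := by
    rw [Finset.range_eq_Ico]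
    symm
    apply Finset.sum_subset
    · exact Finset.Ico_subset_Ico (by omega) hsub
    · intro t ht hnt
      simp only [Finset.mem_Ico] at ht hnt
      rw [hzero t (by omega), mul_zero]
  rw [hss, ← Finset.sum_Ico_consecutive _ (by omega : A ≤ A + m) (by omega : A + m ≤ A + 2 * m)]
  have s1 : ∑ t ∈ Finset.Ico A (A + m), f t * haarBlock p n ℓ e t
      = (∑ t ∈ Finset.Ico A (A + m), f t) * (((2 : ℝ) ^ (((n : ℝ) - p) / 2) : ℝ) : ℂ) := by
    rw [Finset.sum_mul]
    exact Finset.sum_congr rfl fun t ht => by rw [e1 t ht]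
  have s2 : ∑ t ∈ Finset.Ico (A + m) (A + 2 * m), f t * haarBlock p n ℓ e t
      = (∑ t ∈ Finset.Ico (A + m) (A + 2 * m), f t)
        * ((-1 : ℂ) ^ e * (((2 : ℝ) ^ (((n : ℝ) - p) / 2) : ℝ) : ℂ)) := by
    rw [Finset.sum_mul]
    exact Finset.sum_congr rfl fun t ht => by rw [e2 t ht]
  rw [s1, s2]
  ring
section Univariate
variable (p n ℓ e : ℕ)

lemma absC : ‖(((2 : ℝ) ^ (((n : ℝ) - p) / 2) : ℝ) : ℂ)‖
    = (2 : ℝ) ^ (((n : ℝ) - p) / 2) := by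
  rw [Complex.norm_real, Real.norm_eq_abs, _root_.abs_of_nonneg (by positivity)]

lemma U_triv (hn : n < p) (hℓ : ℓ < 2 ^ n) (ω : ℂ) (hω : ‖ω‖ = 1) :
    ‖∑ t ∈ Finset.range (2 ^ p), ω ^ t * haarBlock p n ℓ e t‖ ≤
      (2 : ℝ) ^ (((p : ℝ) - n) / 2) := by
  rw [haar_split p n ℓ e hn hℓ, norm_mul, absC]
  have hs : ∀ a b : ℕ, ‖∑ t ∈ Finset.Ico a b, ω ^ t‖ ≤ ((b - a : ℕ) : ℝ) := by
    intro a b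
    calc ‖∑ t ∈ Finset.Ico a b, ω ^ t‖
        ≤ ∑ t ∈ Finset.Ico a b, ‖ω ^ t‖ := norm_sum_le _ _
      _ = ∑ t ∈ Finset.Ico a b, 1 := by
          refine Finset.sum_congr rfl fun t _ => ?_
          rw [norm_pow, hω, one_pow]
      _ = ((b - a : ℕ) : ℝ) := by rw [Finset.sum_const, Nat.card_Ico]; simp
  set A := ℓ * 2 ^ (p - n)
  set m := 2 ^ (p - n - 1) with hm
  clear_value A m
  have h1 := hs A (A + m)
  have h2 := hs (A + m) (A + 2 * m)
  have hc1 : ((A + m - A : ℕ) : ℝ) = (m : ℝ) := by congr 1; omega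
  have hc2 : ((A + 2 * m - (A + m) : ℕ) : ℝ) = (m : ℝ) := by congr 1; omega
  rw [hc1] at h1; rw [hc2] at h2
  have habs : ‖(∑ t ∈ Finset.Ico A (A + m), ω ^ t) +
      (-1 : ℂ) ^ e * ∑ t ∈ Finset.Ico (A + m) (A + 2 * m), ω ^ t‖ ≤ (m : ℝ) + m := by
    calc ‖_‖ ≤ ‖∑ t ∈ Finset.Ico A (A + m), ω ^ t‖ +
          ‖(-1 : ℂ) ^ e * ∑ t ∈ Finset.Ico (A + m) (A + 2 * m), ω ^ t‖ :=
        norm_add_le _ _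
      _ ≤ (m : ℝ) + m := by
          rw [norm_mul, norm_pow]
          simp only [norm_neg, norm_one, one_pow, one_mul]
          exact add_le_add h1 h2
  have hmm : (m : ℝ) + m = (2 : ℝ) ^ (((p : ℝ) - n) / 2) * (2 : ℝ) ^ (((p : ℝ) - n) / 2) := by
    have hnat : (m : ℝ) + m = ((2 ^ (p - n) : ℕ) : ℝ) := by
      rw [hm]
      have : (2 : ℕ) ^ (p - n) = 2 ^ (p - n - 1) + 2 ^ (p - n - 1) := by
        rw [← two_mul, ← pow_succ']
        congr 1
        omega
      rw [this]
      push_cast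
      ring
    rw [hnat, ← Real.rpow_add two_pos]
    have : ((p : ℝ) - n) / 2 + ((p : ℝ) - n) / 2 = ((p - n : ℕ) : ℝ) := by
      rw [Nat.cast_sub hn.le]; ring
    rw [this, Real.rpow_natCast]
    push_cast
    ring
  calc (2 : ℝ) ^ (((n : ℝ) - p) / 2) * ‖_‖
      ≤ (2 : ℝ) ^ (((n : ℝ) - p) / 2) * ((m : ℝ) + m) := by
        exact mul_le_mul_of_nonneg_left habs (by positivity)
    _ = (2 : ℝ) ^ (((n : ℝ) - p) / 2) * ((2 : ℝ) ^ (((p : ℝ) - n) / 2) *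
          (2 : ℝ) ^ (((p : ℝ) - n) / 2)) := by rw [hmm]
    _ = ((2 : ℝ) ^ (((n : ℝ) - p) / 2) * (2 : ℝ) ^ (((p : ℝ) - n) / 2)) *
          (2 : ℝ) ^ (((p : ℝ) - n) / 2) := by ring
    _ = (2 : ℝ) ^ (((p : ℝ) - n) / 2) := by
        rw [← Real.rpow_add two_pos]
        have h0 : ((n : ℝ) - p) / 2 + ((p : ℝ) - n) / 2 = 0 := by ring
        rw [h0, Real.rpow_zero, one_mul]

lemma U_geo (hn : n < p) (hℓ : ℓ < 2 ^ n) (ω : ℂ) (hω : ‖ω‖ = 1)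
    (δ : ℝ) (hδ : 0 < δ) (hlb : δ ≤ ‖ω - 1‖) :
    ‖∑ t ∈ Finset.range (2 ^ p), ω ^ t * haarBlock p n ℓ e t‖ ≤
      (2 : ℝ) ^ (((n : ℝ) - p) / 2) * (4 / δ) := by
  have hω1 : ω ≠ 1 := by
    intro h
    rw [h] at hlb
    simp at hlb
    linarith
  rw [haar_split p n ℓ e hn hℓ, norm_mul, absC]
  apply mul_le_mul_of_nonneg_left ?_ (by positivity)
  have h1 := geo_abs ω hω hω1 (ℓ * 2 ^ (p - n)) (ℓ * 2 ^ (p - n) + 2 ^ (p - n - 1))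
  have h2 := geo_abs ω hω hω1 (ℓ * 2 ^ (p - n) + 2 ^ (p - n - 1))
      (ℓ * 2 ^ (p - n) + 2 * 2 ^ (p - n - 1))
  have hq : 2 / ‖ω - 1‖ ≤ 2 / δ := by gcongr
  calc ‖_‖ ≤ ‖∑ t ∈ Finset.Ico (ℓ * 2 ^ (p - n))
          (ℓ * 2 ^ (p - n) + 2 ^ (p - n - 1)), ω ^ t‖ +
        ‖(-1 : ℂ) ^ e * ∑ t ∈ Finset.Ico (ℓ * 2 ^ (p - n) + 2 ^ (p - n - 1))
          (ℓ * 2 ^ (p - n) + 2 * 2 ^ (p - n - 1)), ω ^ t‖ := norm_add_le _ _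
    _ ≤ 2 / δ + 2 / δ := by
        rw [norm_mul, norm_pow]
        simp only [norm_neg, norm_one, one_pow, one_mul]
        exact add_le_add (h1.trans hq) (h2.trans hq)
    _ = 4 / δ := by ring

end Univariate

lemma conj_four (p : ℕ) (k₁ k₂ : ℤ) (t₁ t₂ : ℕ) :
    (starRingEnd ℂ) (fourierVec2 p k₁ k₂ t₁ t₂) =
      ((1 / (2 ^ p) : ℝ) : ℂ) *
        (Complex.exp (((-(2 * π * (k₁ : ℝ) / 2 ^ p)) : ℝ) * Complex.I) ^ t₁ *
          Complex.exp (((-(2 * π * (k₂ : ℝ) / 2 ^ p)) : ℝ) * Complex.I) ^ t₂) := by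
  unfold fourierVec2
  rw [map_mul, Complex.conj_ofReal]
  congr 1
  rw [← Complex.exp_nat_mul, ← Complex.exp_nat_mul, ← Complex.exp_add, ← Complex.exp_conj]
  congr 1
  simp only [map_div₀, map_mul, map_add, map_pow, map_ofNat, Complex.conj_I,
    Complex.conj_ofReal, map_natCast, map_intCast]
  push_cast
  ring

/-- Bivariate local coherence bound: for `N = 2^p`, `p ≥ 8`, all frequencies
`(k₁,k₂)` with `-N/2+1 ≤ k₁,k₂ ≤ N/2`, not both zero, and every bivariate Haar
basis element `h^e_{n,ℓ}` with `e ∈ {(0,1),(1,0),(1,1)}`, one has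
`|⟨φ_{k₁,k₂}, h^e_{n,ℓ}⟩| ≤ min(1, 18π/max(|k₁|,|k₂|))`. -/
theorem stmt_7 (p : ℕ) (hp : 8 ≤ p) (k₁ k₂ : ℤ)
    (hk1 : -(2 ^ p : ℤ) / 2 + 1 ≤ k₁ ∧ k₁ ≤ 2 ^ p / 2)
    (hk2 : -(2 ^ p : ℤ) / 2 + 1 ≤ k₂ ∧ k₂ ≤ 2 ^ p / 2)
    (hk : ¬(k₁ = 0 ∧ k₂ = 0))
    (n ℓ₁ ℓ₂ e₁ e₂ : ℕ) (hn : n < p) (hℓ₁ : ℓ₁ < 2 ^ n) (hℓ₂ : ℓ₂ < 2 ^ n)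
    (he₁ : e₁ ≤ 1) (he₂ : e₂ ≤ 1) (he : ¬(e₁ = 0 ∧ e₂ = 0)) :
    ‖∑ t₁ ∈ Finset.range (2 ^ p), ∑ t₂ ∈ Finset.range (2 ^ p),
        (starRingEnd ℂ) (fourierVec2 p k₁ k₂ t₁ t₂) * haar2 p n ℓ₁ ℓ₂ e₁ e₂ t₁ t₂‖ ≤
      min 1 (18 * π / max |(k₁ : ℝ)| |(k₂ : ℝ)|) := by
  set ω₁ : ℂ := Complex.exp (((-(2 * π * (k₁ : ℝ) / 2 ^ p)) : ℝ) * Complex.I) with hω₁def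
  set ω₂ : ℂ := Complex.exp (((-(2 * π * (k₂ : ℝ) / 2 ^ p)) : ℝ) * Complex.I) with hω₂def
  have hω₁ : ‖ω₁‖ = 1 := Complex.norm_exp_ofReal_mul_I _
  have hω₂ : ‖ω₂‖ = 1 := Complex.norm_exp_ofReal_mul_I _
  set U₁ := ∑ t ∈ Finset.range (2 ^ p), ω₁ ^ t * haarBlock p n ℓ₁ e₁ t with hU₁def
  set U₂ := ∑ t ∈ Finset.range (2 ^ p), ω₂ ^ t * haarBlock p n ℓ₂ e₂ t with hU₂def
  have hfact : ∑ t₁ ∈ Finset.range (2 ^ p), ∑ t₂ ∈ Finset.range (2 ^ p),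
      (starRingEnd ℂ) (fourierVec2 p k₁ k₂ t₁ t₂) * haar2 p n ℓ₁ ℓ₂ e₁ e₂ t₁ t₂ =
      ((1 / (2 ^ p) : ℝ) : ℂ) * (U₁ * U₂) := by
    calc ∑ t₁ ∈ Finset.range (2 ^ p), ∑ t₂ ∈ Finset.range (2 ^ p),
          (starRingEnd ℂ) (fourierVec2 p k₁ k₂ t₁ t₂) * haar2 p n ℓ₁ ℓ₂ e₁ e₂ t₁ t₂
        = ∑ t₁ ∈ Finset.range (2 ^ p), ∑ t₂ ∈ Finset.range (2 ^ p),
          ((1 / (2 ^ p) : ℝ) : ℂ) * ((ω₁ ^ t₁ * haarBlock p n ℓ₁ e₁ t₁) *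
            (ω₂ ^ t₂ * haarBlock p n ℓ₂ e₂ t₂)) := by
          refine Finset.sum_congr rfl fun t₁ _ => Finset.sum_congr rfl fun t₂ _ => ?_
          rw [conj_four]
          unfold haar2
          ring
      _ = ((1 / (2 ^ p) : ℝ) : ℂ) * (U₁ * U₂) := by
          rw [hU₁def, hU₂def, Finset.sum_mul_sum, Finset.mul_sum]
          refine Finset.sum_congr rfl fun t₁ _ => ?_
          rw [Finset.mul_sum]
  rw [hfact, norm_mul, norm_mul, Complex.norm_real, Real.norm_eq_abs,
    _root_.abs_of_pos (by positivity : (0 : ℝ) < 1 / 2 ^ p)]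
  set C := (2 : ℝ) ^ (((n : ℝ) - p) / 2) with hCdef
  set D := (2 : ℝ) ^ (((p : ℝ) - n) / 2) with hDdef
  have hCpos : 0 < C := by rw [hCdef]; positivity
  have hDpos : 0 < D := by rw [hDdef]; positivity
  have hCD : C * D = 1 := by
    rw [hCdef, hDdef, ← Real.rpow_add two_pos]
    have h0 : ((n : ℝ) - p) / 2 + ((p : ℝ) - n) / 2 = 0 := by ring
    rw [h0, Real.rpow_zero]
  have hT₁ : ‖U₁‖ ≤ D := U_triv p n ℓ₁ e₁ hn hℓ₁ ω₁ hω₁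
  have hT₂ : ‖U₂‖ ≤ D := U_triv p n ℓ₂ e₂ hn hℓ₂ ω₂ hω₂
  have h2p : (0 : ℝ) < 2 ^ p := by positivity
  -- bound on |k| ≤ 2^(p-1) in ℤ
  have hbd : ∀ k : ℤ, -(2 ^ p : ℤ) / 2 + 1 ≤ k → k ≤ 2 ^ p / 2 → |k| ≤ 2 ^ (p - 1) := by
    intro k h1 h2
    have hpow2 : (2 : ℤ) ^ p = 2 * 2 ^ (p - 1) := by
      rw [← pow_succ']
      congr 1
      omega
    have hd1 : ((2 : ℤ) ^ p) / 2 = 2 ^ (p - 1) := by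
      rw [hpow2, Int.mul_ediv_cancel_left _ two_ne_zero]
    have hd2 : (-(2 : ℤ) ^ p) / 2 = -(2 ^ (p - 1)) := by
      rw [hpow2, show -(2 * (2 : ℤ) ^ (p - 1)) = 2 * -(2 ^ (p - 1)) by ring,
        Int.mul_ediv_cancel_left _ two_ne_zero]
    rw [hd1] at h2
    rw [hd2] at h1
    rw [abs_le]
    constructor <;> linarith
  refine le_min ?_ ?_
  · -- trivial bound ≤ 1
    calc 1 / 2 ^ p * (‖U₁‖ * ‖U₂‖)
        ≤ 1 / 2 ^ p * (D * D) := by gcongr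
      _ = 1 / 2 ^ p * D * D := by ring
      _ ≤ 1 := by
          have hDD : D * D = (2 : ℝ) ^ ((p : ℝ) - n) := by
            rw [hDdef, ← Real.rpow_add two_pos]
            ring_nf
          have hle : (2 : ℝ) ^ ((p : ℝ) - n) ≤ (2 : ℝ) ^ (p : ℝ) :=
            Real.rpow_le_rpow_of_exponent_le one_le_two (by
              have : (0 : ℝ) ≤ n := Nat.cast_nonneg n
              linarith)
          have hnat : (2 : ℝ) ^ (p : ℝ) = (2 : ℝ) ^ p := Real.rpow_natCast 2 p
          calc 1 / 2 ^ p * D * D = D * D / 2 ^ p := by ring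
            _ ≤ (2 : ℝ) ^ p / 2 ^ p := by
                rw [hDD]
                gcongr
                rw [← hnat]
                exact hle
            _ = 1 := by field_simp
  · -- geometric bound
    rcases le_total |(k₂ : ℝ)| |(k₁ : ℝ)| with hmax | hmax
    · -- |k₁| is the max
      have hk₁0 : k₁ ≠ 0 := by
        intro h0
        apply hk
        refine ⟨h0, ?_⟩
        have : |(k₂ : ℝ)| ≤ 0 := by
          rw [h0] at hmax
          simpa using hmax
        have : |(k₂ : ℝ)| = 0 := le_antisymm this (abs_nonneg _)
        exact_mod_cast abs_eq_zero.mp this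
      set K := |(k₁ : ℝ)| with hKdef
      have hKpos : 0 < K := by
        rw [hKdef, abs_pos]
        exact_mod_cast hk₁0
      have hlb := omega_lb p (by omega) k₁ hk₁0 (hbd k₁ hk1.1 hk1.2)
      have hδpos : 0 < 4 * K / 2 ^ p := by positivity
      have hG : ‖U₁‖ ≤ C * (4 / (4 * K / 2 ^ p)) :=
        U_geo p n ℓ₁ e₁ hn hℓ₁ ω₁ hω₁ (4 * K / 2 ^ p) hδpos hlb
      rw [max_eq_left hmax]
      calc 1 / 2 ^ p * (‖U₁‖ * ‖U₂‖)
          ≤ 1 / 2 ^ p * ((C * (4 / (4 * K / 2 ^ p))) * D) := by gcongr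
        _ = 1 / 2 ^ p * (C * (4 / (4 * K / 2 ^ p))) * D := by ring
        _ = (C * D) / K := by field_simp
        _ = 1 / K := by rw [hCD]
        _ ≤ 18 * π / K := by
            gcongr
            nlinarith [Real.pi_gt_three]
    · -- |k₂| is the max
      have hk₂0 : k₂ ≠ 0 := by
        intro h0
        apply hk
        refine ⟨?_, h0⟩
        have : |(k₁ : ℝ)| ≤ 0 := by
          rw [h0] at hmax
          simpa using hmax
        have : |(k₁ : ℝ)| = 0 := le_antisymm this (abs_nonneg _)
        exact_mod_cast abs_eq_zero.mp this
      set K := |(k₂ : ℝ)| with hKdef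
      have hKpos : 0 < K := by
        rw [hKdef, abs_pos]
        exact_mod_cast hk₂0
      have hlb := omega_lb p (by omega) k₂ hk₂0 (hbd k₂ hk2.1 hk2.2)
      have hδpos : 0 < 4 * K / 2 ^ p := by positivity
      have hG : ‖U₂‖ ≤ C * (4 / (4 * K / 2 ^ p)) :=
        U_geo p n ℓ₂ e₂ hn hℓ₂ ω₂ hω₂ (4 * K / 2 ^ p) hδpos hlb
      rw [max_eq_right hmax]
      calc 1 / 2 ^ p * (‖U₁‖ * ‖U₂‖)
          ≤ 1 / 2 ^ p * (D * (C * (4 / (4 * K / 2 ^ p)))) := by gcongr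
        _ = 1 / 2 ^ p * D * (C * (4 / (4 * K / 2 ^ p))) := by ring
        _ = (C * D) / K := by field_simp
        _ = 1 / K := by rw [hCD]
        _ ≤ 18 * π / K := by
            gcongr
            nlinarith [Real.pi_gt_three]
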